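/- Let N : [0,∞) → ℝ be nondecreasing with N(t) ~ c·t^m·e^t (c > 0, m ≥ 0 integer) and let N_f(t) satisfy |N_f(t) − F·N(t)| ≤ ε·N(t) for all t > L′, and |N_f(t)| ≤ M·N(t) for all t. Then limsup_{s→1⁺} |(∫₀^∞ e^{−st} dN_f(t))/(∫₀^∞ e^{−st} dN(t)) − F| ≤ ε. -/

import Mathlib

open Real Filter MeasureTheory

set_option maxHeartbeats 1000000 in
theorem stmt_18 (N : ℝ → ℝ) (hmono : MonotoneOn N (Set.Ici 0))
    (c : ℝ) (hc : 0 < c) (m : ℕ)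
    (hN : Tendsto (fun t => N t / (c * t ^ m * Real.exp t)) atTop (nhds 1))
    (Nf : ℝ → ℝ) (hNf : Measurable Nf) (hNmeas : Measurable N)
    (F ε M L' : ℝ) (hε : 0 ≤ ε) (hM : 0 ≤ M)
    (hclose : ∀ t, L' < t → |Nf t - F * N t| ≤ ε * N t)
    (hbound : ∀ t, 0 ≤ t → |Nf t| ≤ M * N t) :
    Filter.limsup
      (fun s : ℝ =>
        |(s * ∫ t in Set.Ici (0 : ℝ), Real.exp (-s * t) * Nf t) /
            (s * ∫ t in Set.Ici (0 : ℝ), Real.exp (-s * t) * N t) - F|)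
      (nhdsWithin 1 (Set.Ioi 1)) ≤ ε := by
  set l := nhdsWithin (1 : ℝ) (Set.Ioi 1) with hl
  -- Step 1: choose T₀
  have h1 : ∀ᶠ t in atTop, N t / (c * t ^ m * Real.exp t) ∈ Set.Ioo (1/2 : ℝ) 2 :=
    hN.eventually (Ioo_mem_nhds (by norm_num) (by norm_num))
  rw [eventually_atTop] at h1
  obtain ⟨T₁, hT₁⟩ := h1
  set T₀ : ℝ := max T₁ (max 1 (L' + 1)) with hT₀def
  have hT₀1 : (1 : ℝ) ≤ T₀ := le_trans (le_max_left 1 (L' + 1)) (le_max_right _ _)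
  have hT₀L : L' < T₀ :=
    lt_of_lt_of_le (by linarith) (le_trans (le_max_right 1 (L' + 1)) (le_max_right _ _))
  have hT₀pos : (0 : ℝ) < T₀ := lt_of_lt_of_le one_pos hT₀1
  have hratio : ∀ t, T₀ ≤ t → N t / (c * t ^ m * Real.exp t) ∈ Set.Ioo (1/2 : ℝ) 2 :=
    fun t ht => hT₁ t (le_trans (le_max_left _ _) ht)
  have hXpos : ∀ t, T₀ ≤ t → 0 < c * t ^ m * Real.exp t := by
    intro t ht
    have ht0 : 0 < t := lt_of_lt_of_le hT₀pos ht
    positivity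
  have hNup : ∀ t, T₀ ≤ t → N t ≤ 2 * (c * t ^ m * Real.exp t) := by
    intro t ht
    have h2 := (hratio t ht).1
    have h2' := (hratio t ht).2
    have := (div_lt_iff₀ (hXpos t ht)).mp h2'
    linarith
  have hNlow : ∀ t, T₀ ≤ t → c / 2 * Real.exp t ≤ N t := by
    intro t ht
    have h2 := (hratio t ht).1
    have h3 : 1/2 * (c * t ^ m * Real.exp t) < N t := (lt_div_iff₀ (hXpos t ht)).mp h2
    have ht1 : (1 : ℝ) ≤ t := le_trans hT₀1 ht
    have htm : (1 : ℝ) ≤ t ^ m := one_le_pow₀ ht1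
    have hkey : c * Real.exp t * 1 ≤ c * Real.exp t * t ^ m :=
      mul_le_mul_of_nonneg_left htm (by positivity)
    nlinarith [Real.exp_pos t]
  have hNnn : ∀ t, T₀ ≤ t → 0 ≤ N t := fun t ht =>
    le_trans (by positivity) (hNlow t ht)
  -- B bounds |N| on [0, T₀]
  set B : ℝ := max |N 0| (N T₀) with hBdef
  have hB0 : 0 ≤ B := le_trans (abs_nonneg _) (le_max_left _ _)
  have hBbd : ∀ t, 0 ≤ t → t ≤ T₀ → |N t| ≤ B := by
    intro t h0 h1'
    have hmem0 : (0 : ℝ) ∈ Set.Ici (0 : ℝ) := Set.self_mem_Ici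
    have hmemt : t ∈ Set.Ici (0 : ℝ) := h0
    have hmemT : T₀ ∈ Set.Ici (0 : ℝ) := hT₀pos.le
    have hlow : N 0 ≤ N t := hmono hmem0 hmemt h0
    have hup : N t ≤ N T₀ := hmono hmemt hmemT h1'
    rw [abs_le]
    constructor
    · have : -|N 0| ≤ N 0 := neg_abs_le _
      have h4 : |N 0| ≤ B := le_max_left _ _
      linarith
    · exact le_trans hup (le_max_right _ _)
  -- pointwise exponential facts
  have hexp_le : ∀ s t : ℝ, 1 ≤ s → 0 ≤ t → Real.exp (-s * t) ≤ Real.exp (-(s - 1) * t) := by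
    intro s t hs ht
    exact Real.exp_le_exp.2 (by nlinarith)
  have hexp1 : ∀ s t : ℝ, 0 ≤ s → 0 ≤ t → Real.exp (-s * t) ≤ 1 := by
    intro s t hs ht
    rw [show (1 : ℝ) = Real.exp 0 by rw [Real.exp_zero]]
    exact Real.exp_le_exp.2 (by nlinarith)
  -- dominating function integrable
  have hD : ∀ s : ℝ, 1 < s →
      IntegrableOn (fun t : ℝ => (B + 2 * c * t ^ m) * Real.exp (-(s - 1) * t)) (Set.Ici 0) := by
    intro s hs
    have ha : 0 < s - 1 := by linarith
    rw [integrableOn_Ici_iff_integrableOn_Ioi]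
    have h1 : IntegrableOn (fun t : ℝ => B * Real.exp (-(s - 1) * t)) (Set.Ioi 0) :=
      (exp_neg_integrableOn_Ioi 0 ha).const_mul B
    have h2 : IntegrableOn (fun t : ℝ => 2 * c * (t ^ m * Real.exp (-(s - 1) * t)))
        (Set.Ioi 0) := by
      have h3 := integrableOn_rpow_mul_exp_neg_mul_rpow (p := 1) (s := (m : ℝ)) (b := s - 1)
        (by exact lt_of_lt_of_le (by norm_num) (Nat.cast_nonneg m)) one_pos ha
      have h4 : IntegrableOn (fun t : ℝ => (t : ℝ) ^ m * Real.exp (-(s - 1) * t))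
          (Set.Ioi 0) := by
        refine h3.congr_fun (fun x hx => ?_) measurableSet_Ioi
        beta_reduce; rw [Real.rpow_natCast, Real.rpow_one]
      exact h4.const_mul _
    exact IntegrableOn.congr_fun (h1.add h2)
      (fun x _ => by simp only [Pi.add_apply]; ring) measurableSet_Ioi
  have hmeasN : ∀ s : ℝ, AEStronglyMeasurable (fun t : ℝ => Real.exp (-s * t) * N t)
      (volume.restrict (Set.Ici 0)) := by
    intro s
    exact ((Real.measurable_exp.comp (measurable_id.const_mul (-s))).mul
      hNmeas).aestronglyMeasurable
  have hmeasNf : ∀ s : ℝ, AEStronglyMeasurable (fun t : ℝ => Real.exp (-s * t) * Nf t)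
      (volume.restrict (Set.Ici 0)) := by
    intro s
    exact ((Real.measurable_exp.comp (measurable_id.const_mul (-s))).mul
      hNf).aestronglyMeasurable
  -- pointwise domination
  have hbd : ∀ s : ℝ, 1 < s → ∀ t, t ∈ Set.Ici (0 : ℝ) →
      ‖Real.exp (-s * t) * N t‖ ≤ (B + 2 * c * t ^ m) * Real.exp (-(s - 1) * t) := by
    intro s hs t ht
    have ht0 : (0 : ℝ) ≤ t := ht
    have hexp : Real.exp (-s * t) ≤ Real.exp (-(s - 1) * t) := hexp_le s t hs.le ht0
    rw [norm_mul, Real.norm_eq_abs, Real.norm_eq_abs, abs_of_pos (Real.exp_pos _)]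
    rcases le_total t T₀ with h | h
    · have hb1 : |N t| ≤ B := hBbd t ht0 h
      have htm : 0 ≤ 2 * c * t ^ m := by positivity
      calc Real.exp (-s * t) * |N t| ≤ Real.exp (-(s - 1) * t) * B :=
            mul_le_mul hexp hb1 (abs_nonneg _) (Real.exp_pos _).le
        _ ≤ (B + 2 * c * t ^ m) * Real.exp (-(s - 1) * t) := by
            nlinarith [Real.exp_pos (-(s - 1) * t)]
    · have h1 := hNup t h
      have h2 := hNnn t h
      rw [abs_of_nonneg h2]
      have heq : Real.exp (-s * t) * Real.exp t = Real.exp (-(s - 1) * t) := by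
        rw [← Real.exp_add]; ring_nf
      have ha2 : Real.exp (-s * t) * N t ≤ Real.exp (-s * t) * (2 * (c * t ^ m * Real.exp t)) :=
        mul_le_mul_of_nonneg_left h1 (Real.exp_pos _).le
      have hb2 : Real.exp (-s * t) * (2 * (c * t ^ m * Real.exp t))
          = 2 * c * t ^ m * Real.exp (-(s - 1) * t) := by rw [← heq]; ring
      have hc2 : 0 ≤ B * Real.exp (-(s - 1) * t) := mul_nonneg hB0 (Real.exp_pos _).le
      have hd2 : (B + 2 * c * t ^ m) * Real.exp (-(s - 1) * t)
          = B * Real.exp (-(s - 1) * t) + 2 * c * t ^ m * Real.exp (-(s - 1) * t) := by ring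
      linarith
  have hIntN : ∀ s : ℝ, 1 < s →
      IntegrableOn (fun t : ℝ => Real.exp (-s * t) * N t) (Set.Ici 0) := by
    intro s hs
    exact Integrable.mono' (hD s hs) (hmeasN s)
      ((ae_restrict_iff' measurableSet_Ici).2 (Eventually.of_forall (hbd s hs)))
  have hNfabs : ∀ t, 0 ≤ t → |Nf t| ≤ M * |N t| := fun t ht =>
    (hbound t ht).trans (mul_le_mul_of_nonneg_left (le_abs_self _) hM)
  have hIntNf : ∀ s : ℝ, 1 < s →
      IntegrableOn (fun t : ℝ => Real.exp (-s * t) * Nf t) (Set.Ici 0) := by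
    intro s hs
    refine Integrable.mono' ((hD s hs).const_mul M) (hmeasNf s)
      ((ae_restrict_iff' measurableSet_Ici).2 (Eventually.of_forall (fun t ht => ?_)))
    have ht0 : (0 : ℝ) ≤ t := ht
    have h1 : ‖Real.exp (-s * t) * Nf t‖ ≤ M * ‖Real.exp (-s * t) * N t‖ := by
      rw [norm_mul, norm_mul, Real.norm_eq_abs, Real.norm_eq_abs, Real.norm_eq_abs,
        abs_of_pos (Real.exp_pos _), ← mul_assoc, mul_comm M, mul_assoc]
      exact mul_le_mul_of_nonneg_left (hNfabs t ht0) (Real.exp_pos _).le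
    exact h1.trans (mul_le_mul_of_nonneg_left (hbd s hs t ht) hM)
  -- splitting the integral at T₀
  have hdisj : Disjoint (Set.Ico (0 : ℝ) T₀) (Set.Ici T₀) :=
    (Set.Iio_disjoint_Ici le_rfl).mono_left Set.Ico_subset_Iio_self
  have hsplit : ∀ f : ℝ → ℝ, IntegrableOn f (Set.Ici (0 : ℝ)) →
      (∫ t in Set.Ici (0 : ℝ), f t)
        = (∫ t in Set.Ico (0 : ℝ) T₀, f t) + ∫ t in Set.Ici T₀, f t := by
    intro f hf
    rw [← setIntegral_union hdisj measurableSet_Ici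
      (hf.mono_set Set.Ico_subset_Ici_self) (hf.mono_set (Set.Ici_subset_Ici.2 hT₀pos.le)),
      Set.Ico_union_Ici_eq_Ici hT₀pos.le]
  -- bound on the initial piece
  have hIcoBound : ∀ s : ℝ, 1 ≤ s →
      |∫ t in Set.Ico (0 : ℝ) T₀, Real.exp (-s * t) * N t| ≤ B * T₀ := by
    intro s hs
    have h1 : ∀ t ∈ Set.Ico (0 : ℝ) T₀, ‖Real.exp (-s * t) * N t‖ ≤ B := by
      intro t ht
      rw [norm_mul, Real.norm_eq_abs, Real.norm_eq_abs, abs_of_pos (Real.exp_pos _)]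
      have := hexp1 s t (by linarith) ht.1
      have := hBbd t ht.1 ht.2.le
      nlinarith [abs_nonneg (N t)]
    have h2 := norm_setIntegral_le_of_norm_le_const (μ := volume) (s := Set.Ico (0 : ℝ) T₀)
      (by rw [Real.volume_Ico]; exact ENNReal.ofReal_lt_top) h1
    rw [Measure.real, Real.volume_Ico, ENNReal.toReal_ofReal (by linarith)] at h2
    simpa using h2
  -- the denominator tends to infinity
  have hItop : Tendsto (fun s : ℝ => ∫ t in Set.Ici (0 : ℝ), Real.exp (-s * t) * N t)
      l atTop := by
    rw [tendsto_atTop]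
    intro K
    set R : ℝ := T₀ + 4 * (|K| + B * T₀ + 1) / c with hRdef
    have hpos : 0 < 4 * (|K| + B * T₀ + 1) / c := by positivity
    have hRT : T₀ < R := by rw [hRdef]; linarith
    have hφ : Tendsto (fun s : ℝ => c / 2 * Real.exp (-(s - 1) * R) * (R - T₀) - B * T₀)
        l (nhds (c / 2 * Real.exp (-((1 : ℝ) - 1) * R) * (R - T₀) - B * T₀)) := by
      apply Tendsto.mono_left _ nhdsWithin_le_nhds
      have hcont : Continuous (fun s : ℝ =>
          c / 2 * Real.exp (-(s - 1) * R) * (R - T₀) - B * T₀) :=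
        (((continuous_const.mul (Real.continuous_exp.comp
          (((continuous_id.sub continuous_const).neg).mul continuous_const))).mul
          continuous_const).sub continuous_const)
      exact hcont.tendsto 1
    have hval : K < c / 2 * Real.exp (-((1 : ℝ) - 1) * R) * (R - T₀) - B * T₀ := by
      have hval2 : c / 2 * (R - T₀) = 2 * (|K| + B * T₀ + 1) := by
        rw [hRdef]; field_simp; ring
      rw [show -((1 : ℝ) - 1) * R = 0 by ring, Real.exp_zero, mul_one]
      nlinarith [le_abs_self K, hB0, hT₀pos]
    filter_upwards [hφ.eventually (eventually_gt_nhds hval), self_mem_nhdsWithin]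
      with s hφs hs1
    have hs1' : (1 : ℝ) < s := hs1
    -- tail lower bound
    have htail : c / 2 * Real.exp (-(s - 1) * R) * (R - T₀)
        ≤ ∫ t in Set.Ici T₀, Real.exp (-s * t) * N t := by
      have hintT : IntegrableOn (fun t : ℝ => Real.exp (-s * t) * N t) (Set.Ici T₀) :=
        (hIntN s hs1').mono_set (Set.Ici_subset_Ici.2 hT₀pos.le)
      have hstep1 : (∫ t in Set.Icc T₀ R, Real.exp (-s * t) * N t)
          ≤ ∫ t in Set.Ici T₀, Real.exp (-s * t) * N t := by
        refine setIntegral_mono_set hintT ?_ (HasSubset.Subset.eventuallyLE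
          Set.Icc_subset_Ici_self)
        refine (ae_restrict_iff' measurableSet_Ici).2 (Eventually.of_forall (fun t ht => ?_))
        have := hNnn t ht
        positivity
      have hstep2 : c / 2 * Real.exp (-(s - 1) * R) * (R - T₀)
          ≤ ∫ t in Set.Icc T₀ R, Real.exp (-s * t) * N t := by
        have hconst : (∫ _t in Set.Icc T₀ R, (c / 2 * Real.exp (-(s - 1) * R)))
            = c / 2 * Real.exp (-(s - 1) * R) * (R - T₀) := by
          rw [setIntegral_const, Real.volume_real_Icc_of_le (by linarith),
            smul_eq_mul, mul_comm]
        rw [← hconst]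
        refine setIntegral_mono_on (integrableOn_const ?_)
          (hintT.mono_set Set.Icc_subset_Ici_self) measurableSet_Icc ?_
        · rw [Real.volume_Icc]; exact ENNReal.ofReal_ne_top
        · intro t ht
          have h1 : c / 2 * Real.exp t ≤ N t := hNlow t ht.1
          have hexpmono : Real.exp (-(s - 1) * R) ≤ Real.exp (-(s - 1) * t) :=
            Real.exp_le_exp.2 (by nlinarith [ht.2])
          have heq : Real.exp (-s * t) * Real.exp t = Real.exp (-(s - 1) * t) := by
            rw [← Real.exp_add]; ring_nf
          nlinarith [Real.exp_pos (-s * t), Real.exp_pos (-(s - 1) * t),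
            mul_le_mul_of_nonneg_left h1 (Real.exp_pos (-s * t)).le]
      linarith
    have hIco : -(B * T₀) ≤ ∫ t in Set.Ico (0 : ℝ) T₀, Real.exp (-s * t) * N t :=
      neg_le_of_abs_le (by simpa [abs_sub_comm] using hIcoBound s hs1'.le) |>.trans_eq rfl
    rw [hsplit _ (hIntN s hs1')]
    linarith
  -- the key estimate
  set C : ℝ := (M + |F| + ε) * (B * T₀) with hCdef
  have hC0 : 0 ≤ C := by positivity
  have hevI : ∀ᶠ s in l, (1 : ℝ) ≤ ∫ t in Set.Ici (0 : ℝ), Real.exp (-s * t) * N t :=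
    hItop.eventually (eventually_ge_atTop 1)
  have hev : ∀ᶠ s in l,
      |(s * ∫ t in Set.Ici (0 : ℝ), Real.exp (-s * t) * Nf t) /
          (s * ∫ t in Set.Ici (0 : ℝ), Real.exp (-s * t) * N t) - F|
        ≤ ε + C / (∫ t in Set.Ici (0 : ℝ), Real.exp (-s * t) * N t) := by
    filter_upwards [hevI, self_mem_nhdsWithin] with s hI1 hs1
    have hs1' : (1 : ℝ) < s := hs1
    set I : ℝ := ∫ t in Set.Ici (0 : ℝ), Real.exp (-s * t) * N t with hI
    set If : ℝ := ∫ t in Set.Ici (0 : ℝ), Real.exp (-s * t) * Nf t with hIf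
    have hIpos : (0 : ℝ) < I := lt_of_lt_of_le one_pos hI1
    have hs0 : s ≠ 0 := by linarith
    rw [mul_div_mul_left If I hs0]
    have hintN := hIntN s hs1'
    have hintNf := hIntNf s hs1'
    set g : ℝ → ℝ := fun t => Real.exp (-s * t) * Nf t - F * (Real.exp (-s * t) * N t)
      with hgdef
    have hgint : IntegrableOn g (Set.Ici 0) := hintNf.sub (hintN.const_mul F)
    have heq : If - F * I = ∫ t in Set.Ici (0 : ℝ), g t := by
      rw [hgdef]
      rw [integral_sub hintNf (hintN.const_mul F), integral_const_mul]
    have hgabs : ∀ t, g t = Real.exp (-s * t) * (Nf t - F * N t) := by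
      intro t; rw [hgdef]; ring
    -- head bound
    have h_head : |∫ t in Set.Ico (0 : ℝ) T₀, g t| ≤ (M + |F|) * (B * T₀) := by
      have h1 : ∀ t ∈ Set.Ico (0 : ℝ) T₀, ‖g t‖ ≤ (M + |F|) * B := by
        intro t ht
        rw [hgabs, norm_mul, Real.norm_eq_abs, Real.norm_eq_abs,
          abs_of_pos (Real.exp_pos _)]
        have he1 := hexp1 s t (by linarith) ht.1
        have hb1 := hBbd t ht.1 ht.2.le
        have hb2 := hNfabs t ht.1
        have h3 : |Nf t - F * N t| ≤ M * |N t| + |F| * |N t| := by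
          calc |Nf t - F * N t| ≤ |Nf t| + |F * N t| := abs_sub _ _
            _ = |Nf t| + |F| * |N t| := by rw [abs_mul]
            _ ≤ M * |N t| + |F| * |N t| := by linarith
        nlinarith [abs_nonneg (Nf t - F * N t), abs_nonneg (N t), abs_nonneg F,
          Real.exp_pos (-s * t)]
      have h2 := norm_setIntegral_le_of_norm_le_const (μ := volume)
        (s := Set.Ico (0 : ℝ) T₀)
        (by rw [Real.volume_Ico]; exact ENNReal.ofReal_lt_top) h1
      rw [Measure.real, Real.volume_Ico, ENNReal.toReal_ofReal (by linarith)] at h2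
      simpa [mul_assoc] using h2
    -- tail bound
    have h_tail : |∫ t in Set.Ici T₀, g t| ≤ ε * (I + B * T₀) := by
      have hintT : IntegrableOn g (Set.Ici T₀) :=
        hgint.mono_set (Set.Ici_subset_Ici.2 hT₀pos.le)
      have hintNT : IntegrableOn (fun t : ℝ => Real.exp (-s * t) * N t) (Set.Ici T₀) :=
        hintN.mono_set (Set.Ici_subset_Ici.2 hT₀pos.le)
      have h1 : |∫ t in Set.Ici T₀, g t| ≤ ∫ t in Set.Ici T₀, ‖g t‖ := by
        rw [← Real.norm_eq_abs]
        exact norm_integral_le_integral_norm _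
      have h2 : (∫ t in Set.Ici T₀, ‖g t‖)
          ≤ ∫ t in Set.Ici T₀, ε * (Real.exp (-s * t) * N t) := by
        refine setIntegral_mono_on hintT.norm (hintNT.const_mul ε) measurableSet_Ici ?_
        intro t ht
        rw [hgabs, norm_mul, Real.norm_eq_abs, Real.norm_eq_abs,
          abs_of_pos (Real.exp_pos _)]
        have hc1 : |Nf t - F * N t| ≤ ε * N t := hclose t (lt_of_lt_of_le hT₀L ht)
        nlinarith [Real.exp_pos (-s * t)]
      have h3 : (∫ t in Set.Ici T₀, ε * (Real.exp (-s * t) * N t))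
          = ε * ∫ t in Set.Ici T₀, Real.exp (-s * t) * N t := integral_const_mul ε _
      have h4 : (∫ t in Set.Ici T₀, Real.exp (-s * t) * N t) ≤ I + B * T₀ := by
        have h5 := hsplit _ hintN
        have h6 := hIcoBound s hs1'.le
        have h7 : -(B * T₀) ≤ ∫ t in Set.Ico (0 : ℝ) T₀, Real.exp (-s * t) * N t :=
          neg_le_of_abs_le h6
        rw [← hI] at h5
        linarith
      calc |∫ t in Set.Ici T₀, g t| ≤ ∫ t in Set.Ici T₀, ‖g t‖ := h1
        _ ≤ ε * ∫ t in Set.Ici T₀, Real.exp (-s * t) * N t := by rw [← h3]; exact h2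
        _ ≤ ε * (I + B * T₀) := mul_le_mul_of_nonneg_left h4 hε
    have hdiff : |If - F * I| ≤ ε * I + C := by
      rw [heq, hsplit _ hgint]
      calc |(∫ t in Set.Ico (0 : ℝ) T₀, g t) + ∫ t in Set.Ici T₀, g t|
          ≤ |∫ t in Set.Ico (0 : ℝ) T₀, g t| + |∫ t in Set.Ici T₀, g t| := abs_add_le _ _
        _ ≤ (M + |F|) * (B * T₀) + ε * (I + B * T₀) := add_le_add h_head h_tail
        _ = ε * I + C := by rw [hCdef]; ring
    have heq2 : If / I - F = (If - F * I) / I := by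
      rw [sub_div, mul_div_assoc, div_self (ne_of_gt hIpos), mul_one]
    rw [heq2, abs_div, abs_of_pos hIpos]
    calc |If - F * I| / I ≤ (ε * I + C) / I := (div_le_div_iff_of_pos_right hIpos).2 hdiff
      _ = ε * I / I + C / I := add_div _ _ _
      _ = ε + C / I := by rw [mul_div_cancel_right₀ ε (ne_of_gt hIpos)]
  -- conclude via limsup comparison
  have hlim : Tendsto
      (fun s : ℝ => ε + C / (∫ t in Set.Ici (0 : ℝ), Real.exp (-s * t) * N t))
      l (nhds ε) := by
    have h1 : Tendsto
        (fun s : ℝ => C / (∫ t in Set.Ici (0 : ℝ), Real.exp (-s * t) * N t))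
        l (nhds 0) := Tendsto.div_atTop tendsto_const_nhds hItop
    simpa using (tendsto_const_nhds (x := ε) (f := l)).add h1
  haveI : l.NeBot := by rw [hl]; exact nhdsGT_neBot 1
  refine le_trans (limsup_le_limsup hev
    (isCoboundedUnder_le_of_le l (fun s => abs_nonneg _)) hlim.isBoundedUnder_le) ?_
  exact le_of_eq hlim.limsup_eq
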